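/- Suppose (P_k^{(j)})_{k≥0, 1≤j≤M} satisfies P_0^{(j)} = 1, P_k^{(j)} is nonincreasing in k with limit 0, and the recursion P_{l+1}^{(j)} − P_{l+2}^{(j)} = ν_j (P_l^{(j)} − P_{l+1}^{(j)}) Σ_{i=1}^M γ_i (P_l^{(i)} + P_{l+1}^{(i)}) for all l ≥ 0 and all j. Then for every k ≥ 0, Σ_{j=1}^M (γ_j/ν_j) P_{k+1}^{(j)} = (Σ_{j=1}^M γ_j P_k^{(j)})^2. -/

import Mathlib

open Finset

theorem stmt_5 (M : ℕ) (hM : 1 ≤ M) (γ ν : Fin M → ℝ)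
    (hγ : ∀ j, 0 < γ j) (hγsum : ∑ j, γ j = 1) (hν : ∀ j, 0 < ν j)
    (P : Fin M → ℕ → ℝ)
    (hP0 : ∀ j, P j 0 = 1)
    (hPnonneg : ∀ j k, 0 ≤ P j k)
    (hPle1 : ∀ j k, P j k ≤ 1)
    (hPmono : ∀ j k, P j (k + 1) ≤ P j k)
    (hPlim : ∀ j, Filter.Tendsto (fun k => P j k) Filter.atTop (nhds 0))
    (hrec : ∀ l j, P j (l + 1) - P j (l + 2) =
      ν j * (P j l - P j (l + 1)) * ∑ i, γ i * (P i l + P i (l + 1))) :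
    ∀ k, ∑ j, γ j / ν j * P j (k + 1) = (∑ j, γ j * P j k) ^ 2 := by
  set f : ℕ → ℝ := fun k => (∑ j, γ j / ν j * P j (k + 1)) - (∑ j, γ j * P j k) ^ 2
    with hf
  have hstep : ∀ l, f l = f (l + 1) := by
    intro l
    have hdiff : (∑ j, γ j / ν j * P j (l + 1)) - (∑ j, γ j / ν j * P j (l + 2))
        = (∑ j, γ j * P j l) ^ 2 - (∑ j, γ j * P j (l + 1)) ^ 2 := by
      rw [← Finset.sum_sub_distrib]
      have : ∀ j ∈ Finset.univ (α := Fin M),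
          γ j / ν j * P j (l + 1) - γ j / ν j * P j (l + 2)
          = (γ j * (P j l - P j (l + 1))) * ∑ i, γ i * (P i l + P i (l + 1)) := by
        intro j _
        have := hrec l j
        have hne : ν j ≠ 0 := (hν j).ne'
        field_simp
        rw [this]
        ring
      rw [Finset.sum_congr rfl this, ← Finset.sum_mul]
      have h1 : ∑ i, γ i * (P i l - P i (l + 1))
          = (∑ j, γ j * P j l) - ∑ j, γ j * P j (l + 1) := by
        rw [← Finset.sum_sub_distrib]; congr 1; ext i; ring
      have h2 : ∑ i, γ i * (P i l + P i (l + 1))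
          = (∑ j, γ j * P j l) + ∑ j, γ j * P j (l + 1) := by
        rw [← Finset.sum_add_distrib]; congr 1; ext i; ring
      rw [h1, h2]; ring
    simp only [hf]
    have : l + 1 + 1 = l + 2 := rfl
    rw [this]
    linarith [hdiff]
  have hconst : ∀ k, f k = f 0 := by
    intro k
    induction k with
    | zero => rfl
    | succ n ih => rw [← hstep n, ih]
  have hlim : Filter.Tendsto f Filter.atTop (nhds 0) := by
    have h1 : Filter.Tendsto (fun k => ∑ j, γ j / ν j * P j (k + 1))
        Filter.atTop (nhds 0) := by
      have : Filter.Tendsto (fun k => ∑ j, γ j / ν j * P j (k + 1))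
          Filter.atTop (nhds (∑ j : Fin M, (0 : ℝ))) := by
        apply tendsto_finset_sum
        intro j _
        have := ((hPlim j).comp (Filter.tendsto_add_atTop_nat 1)).const_mul (γ j / ν j)
        simpa using this
      simpa using this
    have h2 : Filter.Tendsto (fun k => (∑ j, γ j * P j k) ^ 2)
        Filter.atTop (nhds 0) := by
      have hs : Filter.Tendsto (fun k => ∑ j, γ j * P j k)
          Filter.atTop (nhds (∑ j : Fin M, (0 : ℝ))) := by
        apply tendsto_finset_sum
        intro j _
        simpa using (hPlim j).const_mul (γ j)
      simp only [Finset.sum_const_zero] at hs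
      simpa using hs.pow 2
    simpa using h1.sub h2
  have hlim0 : Filter.Tendsto f Filter.atTop (nhds (f 0)) := by
    have : f = fun _ => f 0 := funext fun k => hconst k
    rw [this]; exact tendsto_const_nhds
  have h0 : f 0 = 0 := tendsto_nhds_unique hlim0 hlim
  intro k
  have := hconst k
  rw [h0] at this
  simpa [hf, sub_eq_zero] using this
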